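/- arXiv:1504.00851 — 3 statements merged into one kernel-verified Lean document; each statement's English description precedes it below -/
import Mathlib

section
/- The commutator subgroup of G_{m,n} = ⟨ρ,σ,τ | ρ^4 = σ^{2^{n+1}} = τ^{2^{m+1}} = 1, ρ² = σ^{2^n}, [ρ,σ] = σ², [ρ,τ] = τ², [σ,τ] = 1⟩ is the subgroup generated by σ² and τ², and this subgroup is abelian; consequently G_{m,n} is metabelian. -/
/-- Relators of the presented group `G_{m,n}`, with commutator convention
`[x,y] = x⁻¹y⁻¹xy`. -/
def GmnRels (m n : ℕ) : Set (FreeGroup (Fin 3)) :=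
  {FreeGroup.of 0 ^ 4,
   FreeGroup.of 1 ^ (2 ^ (n + 1)),
   FreeGroup.of 2 ^ (2 ^ (m + 1)),
   FreeGroup.of 0 ^ 2 * (FreeGroup.of 1 ^ (2 ^ n))⁻¹,
   (FreeGroup.of 0)⁻¹ * (FreeGroup.of 1)⁻¹ * FreeGroup.of 0 * FreeGroup.of 1 *
     (FreeGroup.of 1 ^ 2)⁻¹,
   (FreeGroup.of 0)⁻¹ * (FreeGroup.of 2)⁻¹ * FreeGroup.of 0 * FreeGroup.of 2 *
     (FreeGroup.of 2 ^ 2)⁻¹,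
   (FreeGroup.of 1)⁻¹ * (FreeGroup.of 2)⁻¹ * FreeGroup.of 1 * FreeGroup.of 2}

/-- The group `G_{m,n} = ⟨ρ,σ,τ ∣ ρ⁴ = σ^{2^{n+1}} = τ^{2^{m+1}} = 1, ρ² = σ^{2^n},
[ρ,σ] = σ², [ρ,τ] = τ², [σ,τ] = 1⟩`. -/
def Gmn (m n : ℕ) := PresentedGroup (GmnRels m n)

instance (m n : ℕ) : Group (Gmn m n) := inferInstanceAs (Group (PresentedGroup _))

def Gρ (m n : ℕ) : Gmn m n := PresentedGroup.of 0
def Gσ (m n : ℕ) : Gmn m n := PresentedGroup.of 1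
def Gτ (m n : ℕ) : Gmn m n := PresentedGroup.of 2

section helpers
variable {G : Type*} [Group G]

/-- Elements of the closure of a pairwise-commuting set commute. -/
private lemma closure_comm {S : Set G} (h : ∀ a ∈ S, ∀ b ∈ S, a * b = b * a) :
    ∀ x ∈ Subgroup.closure S, ∀ y ∈ Subgroup.closure S, x * y = y * x := by
  have key : ∀ x ∈ Subgroup.closure S, ∀ b ∈ S, Commute x b := by
    intro x hx
    induction hx using Subgroup.closure_induction with
    | mem a ha => exact fun b hb => h a ha b hb
    | one => exact fun b hb => Commute.one_left b
    | mul x y _ _ ihx ihy => exact fun b hb => (ihx b hb).mul_left (ihy b hb)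
    | inv x _ ih => exact fun b hb => (ih b hb).inv_left
  intro x hx y hy
  induction hy using Subgroup.closure_induction with
  | mem b hb => exact key x hx b hb
  | one => simp
  | mul a b _ _ iha ihb => exact (Commute.mul_right iha ihb : Commute x _)
  | inv a _ ih => exact (Commute.inv_right ih : Commute x _)

private lemma mem_normalizer_closure {S : Set G} {g : G}
    (h1 : ∀ s ∈ S, g * s * g⁻¹ ∈ Subgroup.closure S)
    (h2 : ∀ s ∈ S, g⁻¹ * s * g ∈ Subgroup.closure S) :
    g ∈ Subgroup.normalizer (Subgroup.closure S : Set G) := by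
  have conj : ∀ (c : G), (∀ s ∈ S, c * s * c⁻¹ ∈ Subgroup.closure S) →
      ∀ h ∈ Subgroup.closure S, c * h * c⁻¹ ∈ Subgroup.closure S := by
    intro c hc h hh
    induction hh using Subgroup.closure_induction with
    | mem a ha => exact hc a ha
    | one => simpa using one_mem _
    | mul a b _ _ iha ihb =>
        have e : c * (a * b) * c⁻¹ = (c * a * c⁻¹) * (c * b * c⁻¹) := by group
        rw [e]; exact mul_mem iha ihb
    | inv a _ ih =>
        have e : c * a⁻¹ * c⁻¹ = (c * a * c⁻¹)⁻¹ := by group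
        rw [e]; exact inv_mem ih
  rw [Subgroup.mem_normalizer_iff]
  intro h
  constructor
  · exact fun hh => conj g h1 h hh
  · intro hh
    have := conj g⁻¹ (fun s hs => by simpa using h2 s hs) _ hh
    simpa [mul_assoc] using this

private lemma conj_sq {a b c : G} (h : a * b * a⁻¹ = c) : a * b ^ 2 * a⁻¹ = c ^ 2 := by
  calc a * b ^ 2 * a⁻¹ = (a * b * a⁻¹) * (a * b * a⁻¹) := by simp [sq, mul_assoc]
    _ = c ^ 2 := by rw [h, sq]

end helpers

open scoped commutatorElement

namespace GmnAux
variable (m n : ℕ)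

lemma rel_hold {r : FreeGroup (Fin 3)} (hr : r ∈ GmnRels m n) :
    (PresentedGroup.mk (GmnRels m n) r : Gmn m n) = 1 :=
  (QuotientGroup.eq_one_iff r).mpr (Subgroup.subset_normalClosure hr)

lemma mk0 : (PresentedGroup.mk (GmnRels m n) (FreeGroup.of 0) : Gmn m n) = Gρ m n := rfl
lemma mk1 : (PresentedGroup.mk (GmnRels m n) (FreeGroup.of 1) : Gmn m n) = Gσ m n := rfl
lemma mk2 : (PresentedGroup.mk (GmnRels m n) (FreeGroup.of 2) : Gmn m n) = Gτ m n := rfl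

lemma hρσ : (Gρ m n)⁻¹ * (Gσ m n)⁻¹ * Gρ m n * Gσ m n = Gσ m n ^ 2 := by
  have h := rel_hold m n (r := (FreeGroup.of 0)⁻¹ * (FreeGroup.of 1)⁻¹ * FreeGroup.of 0 *
      FreeGroup.of 1 * (FreeGroup.of 1 ^ 2)⁻¹) (by simp [GmnRels])
  simp only [map_mul, map_inv, map_pow, mk0, mk1] at h
  exact mul_inv_eq_one.mp h

lemma hρτ : (Gρ m n)⁻¹ * (Gτ m n)⁻¹ * Gρ m n * Gτ m n = Gτ m n ^ 2 := by
  have h := rel_hold m n (r := (FreeGroup.of 0)⁻¹ * (FreeGroup.of 2)⁻¹ * FreeGroup.of 0 *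
      FreeGroup.of 2 * (FreeGroup.of 2 ^ 2)⁻¹) (by simp [GmnRels])
  simp only [map_mul, map_inv, map_pow, mk0, mk2] at h
  exact mul_inv_eq_one.mp h

lemma hστ : Commute (Gσ m n) (Gτ m n) := by
  have h := rel_hold m n (r := (FreeGroup.of 1)⁻¹ * (FreeGroup.of 2)⁻¹ * FreeGroup.of 1 *
      FreeGroup.of 2) (by simp [GmnRels])
  simp only [map_mul, map_inv, mk1, mk2] at h
  have h2 : (Gτ m n * Gσ m n)⁻¹ * (Gσ m n * Gτ m n) = 1 := by
    rw [← (show (Gσ m n)⁻¹ * (Gτ m n)⁻¹ * Gσ m n * Gτ m n = (1 : Gmn m n) from h)]; group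
  exact (inv_mul_eq_one.mp h2).symm

/-- `ρ⁻¹ σ⁻¹ ρ = σ` -/
lemma e1σ : (Gρ m n)⁻¹ * (Gσ m n)⁻¹ * Gρ m n = Gσ m n := by
  calc (Gρ m n)⁻¹ * (Gσ m n)⁻¹ * Gρ m n
      = ((Gρ m n)⁻¹ * (Gσ m n)⁻¹ * Gρ m n * Gσ m n) * (Gσ m n)⁻¹ := by group
    _ = Gσ m n ^ 2 * (Gσ m n)⁻¹ := by rw [hρσ]
    _ = Gσ m n := by group

lemma e1τ : (Gρ m n)⁻¹ * (Gτ m n)⁻¹ * Gρ m n = Gτ m n := by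
  calc (Gρ m n)⁻¹ * (Gτ m n)⁻¹ * Gρ m n
      = ((Gρ m n)⁻¹ * (Gτ m n)⁻¹ * Gρ m n * Gτ m n) * (Gτ m n)⁻¹ := by group
    _ = Gτ m n ^ 2 * (Gτ m n)⁻¹ := by rw [hρτ]
    _ = Gτ m n := by group

/-- `ρ σ ρ⁻¹ = σ⁻¹` -/
lemma cρσ : Gρ m n * Gσ m n * (Gρ m n)⁻¹ = (Gσ m n)⁻¹ := by
  calc Gρ m n * Gσ m n * (Gρ m n)⁻¹
      = Gρ m n * ((Gρ m n)⁻¹ * (Gσ m n)⁻¹ * Gρ m n) * (Gρ m n)⁻¹ := by rw [e1σ]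
    _ = (Gσ m n)⁻¹ := by group

/-- `ρ⁻¹ σ ρ = σ⁻¹` -/
lemma cρσ' : (Gρ m n)⁻¹ * Gσ m n * Gρ m n = (Gσ m n)⁻¹ := by
  calc (Gρ m n)⁻¹ * Gσ m n * Gρ m n
      = ((Gρ m n)⁻¹ * (Gσ m n)⁻¹ * Gρ m n)⁻¹ := by group
    _ = (Gσ m n)⁻¹ := by rw [e1σ]

lemma cρτ : Gρ m n * Gτ m n * (Gρ m n)⁻¹ = (Gτ m n)⁻¹ := by
  calc Gρ m n * Gτ m n * (Gρ m n)⁻¹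
      = Gρ m n * ((Gρ m n)⁻¹ * (Gτ m n)⁻¹ * Gρ m n) * (Gρ m n)⁻¹ := by rw [e1τ]
    _ = (Gτ m n)⁻¹ := by group

lemma cρτ' : (Gρ m n)⁻¹ * Gτ m n * Gρ m n = (Gτ m n)⁻¹ := by
  calc (Gρ m n)⁻¹ * Gτ m n * Gρ m n
      = ((Gρ m n)⁻¹ * (Gτ m n)⁻¹ * Gρ m n)⁻¹ := by group
    _ = (Gτ m n)⁻¹ := by rw [e1τ]

/-- The subgroup `⟨σ², τ²⟩`. -/
abbrev H : Subgroup (Gmn m n) := Subgroup.closure {Gσ m n ^ 2, Gτ m n ^ 2}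

lemma σ2_mem : Gσ m n ^ 2 ∈ H m n := Subgroup.subset_closure (Set.mem_insert _ _)
lemma τ2_mem : Gτ m n ^ 2 ∈ H m n :=
  Subgroup.subset_closure (Set.mem_insert_iff.mpr (Or.inr rfl))

lemma Hnormal : (H m n).Normal := by
  rw [← Subgroup.normalizer_eq_top_iff, ← top_le_iff]
  have htop : (⊤ : Subgroup (Gmn m n)) =
      Subgroup.closure (G := Gmn m n) (Set.range (PresentedGroup.of : Fin 3 → Gmn m n)) :=
    (PresentedGroup.closure_range_of (GmnRels m n)).symm
  rw [htop, Subgroup.closure_le]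
  rintro _ ⟨i, rfl⟩
  fin_cases i
  · -- ρ
    show Gρ m n ∈ Subgroup.normalizer (H m n : Set (Gmn m n))
    apply mem_normalizer_closure
    · intro s hs
      simp only [Set.mem_insert_iff, Set.mem_singleton_iff] at hs
      rcases hs with rfl | rfl
      · rw [conj_sq (cρσ m n), inv_pow]
        exact inv_mem (σ2_mem m n)
      · rw [conj_sq (cρτ m n), inv_pow]
        exact inv_mem (τ2_mem m n)
    · intro s hs
      simp only [Set.mem_insert_iff, Set.mem_singleton_iff] at hs
      rcases hs with rfl | rfl
      · have h := conj_sq (a := (Gρ m n)⁻¹) (b := Gσ m n) (by simpa using cρσ' m n)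
        rw [inv_inv] at h
        rw [h, inv_pow]
        exact inv_mem (σ2_mem m n)
      · have h := conj_sq (a := (Gρ m n)⁻¹) (b := Gτ m n) (by simpa using cρτ' m n)
        rw [inv_inv] at h
        rw [h, inv_pow]
        exact inv_mem (τ2_mem m n)
  · -- σ
    show Gσ m n ∈ Subgroup.normalizer (H m n : Set (Gmn m n))
    apply mem_normalizer_closure
    · intro s hs
      simp only [Set.mem_insert_iff, Set.mem_singleton_iff] at hs
      rcases hs with rfl | rfl
      · have e : Gσ m n * Gσ m n ^ 2 * (Gσ m n)⁻¹ = Gσ m n ^ 2 := by group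
        rw [e]; exact σ2_mem m n
      · have c : Gσ m n * Gτ m n ^ 2 = Gτ m n ^ 2 * Gσ m n := (hστ m n).pow_right 2
        have e : Gσ m n * Gτ m n ^ 2 * (Gσ m n)⁻¹ = Gτ m n ^ 2 := by rw [c]; group
        rw [e]; exact τ2_mem m n
    · intro s hs
      simp only [Set.mem_insert_iff, Set.mem_singleton_iff] at hs
      rcases hs with rfl | rfl
      · have e : (Gσ m n)⁻¹ * Gσ m n ^ 2 * Gσ m n = Gσ m n ^ 2 := by group
        rw [e]; exact σ2_mem m n
      · have c : (Gσ m n)⁻¹ * Gτ m n ^ 2 = Gτ m n ^ 2 * (Gσ m n)⁻¹ :=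
          ((hστ m n).pow_right 2).inv_left
        have e : (Gσ m n)⁻¹ * Gτ m n ^ 2 * Gσ m n = Gτ m n ^ 2 := by rw [c]; group
        rw [e]; exact τ2_mem m n
  · -- τ
    show Gτ m n ∈ Subgroup.normalizer (H m n : Set (Gmn m n))
    apply mem_normalizer_closure
    · intro s hs
      simp only [Set.mem_insert_iff, Set.mem_singleton_iff] at hs
      rcases hs with rfl | rfl
      · have c : Gτ m n * Gσ m n ^ 2 = Gσ m n ^ 2 * Gτ m n := (hστ m n).symm.pow_right 2
        have e : Gτ m n * Gσ m n ^ 2 * (Gτ m n)⁻¹ = Gσ m n ^ 2 := by rw [c]; group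
        rw [e]; exact σ2_mem m n
      · have e : Gτ m n * Gτ m n ^ 2 * (Gτ m n)⁻¹ = Gτ m n ^ 2 := by group
        rw [e]; exact τ2_mem m n
    · intro s hs
      simp only [Set.mem_insert_iff, Set.mem_singleton_iff] at hs
      rcases hs with rfl | rfl
      · have c : (Gτ m n)⁻¹ * Gσ m n ^ 2 = Gσ m n ^ 2 * (Gτ m n)⁻¹ :=
          ((hστ m n).symm.pow_right 2).inv_left
        have e : (Gτ m n)⁻¹ * Gσ m n ^ 2 * Gτ m n = Gσ m n ^ 2 := by rw [c]; group
        rw [e]; exact σ2_mem m n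
      · have e : (Gτ m n)⁻¹ * Gτ m n ^ 2 * Gτ m n = Gτ m n ^ 2 := by group
        rw [e]; exact τ2_mem m n

/-- Commutators of generators lie in `H`. -/
lemma comm_gen_mem (i j : Fin 3) :
    ⁅(PresentedGroup.of i : Gmn m n), (PresentedGroup.of j : Gmn m n)⁆ ∈ H m n := by
  have hρσc : ⁅Gρ m n, Gσ m n⁆ = (Gσ m n ^ 2)⁻¹ := by
    rw [commutatorElement_def, cρσ m n, ← inv_pow]; group
  have hρτc : ⁅Gρ m n, Gτ m n⁆ = (Gτ m n ^ 2)⁻¹ := by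
    rw [commutatorElement_def, cρτ m n, ← inv_pow]; group
  have hinv : ∀ a b : Gmn m n, ⁅a, b⁆ ∈ H m n → ⁅b, a⁆ ∈ H m n := by
    intro a b hab
    rw [← commutatorElement_inv]
    exact inv_mem hab
  fin_cases i <;> fin_cases j
  · show ⁅Gρ m n, Gρ m n⁆ ∈ H m n
    rw [commutatorElement_self]; exact one_mem _
  · show ⁅Gρ m n, Gσ m n⁆ ∈ H m n
    rw [hρσc]; exact inv_mem (σ2_mem m n)
  · show ⁅Gρ m n, Gτ m n⁆ ∈ H m n
    rw [hρτc]; exact inv_mem (τ2_mem m n)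
  · show ⁅Gσ m n, Gρ m n⁆ ∈ H m n
    exact hinv _ _ (by rw [hρσc]; exact inv_mem (σ2_mem m n))
  · show ⁅Gσ m n, Gσ m n⁆ ∈ H m n
    rw [commutatorElement_self]; exact one_mem _
  · show ⁅Gσ m n, Gτ m n⁆ ∈ H m n
    rw [commutatorElement_eq_one_iff_commute.mpr (hστ m n)]; exact one_mem _
  · show ⁅Gτ m n, Gρ m n⁆ ∈ H m n
    exact hinv _ _ (by rw [hρτc]; exact inv_mem (τ2_mem m n))
  · show ⁅Gτ m n, Gσ m n⁆ ∈ H m n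
    exact hinv _ _ (by rw [commutatorElement_eq_one_iff_commute.mpr (hστ m n)]; exact one_mem _)
  · show ⁅Gτ m n, Gτ m n⁆ ∈ H m n
    rw [commutatorElement_self]; exact one_mem _

lemma commutator_le_H : commutator (Gmn m n) ≤ H m n := by
  haveI := Hnormal m n
  set φ := QuotientGroup.mk' (H m n) with hφ
  -- the quotient is generated by the images of the generators
  have hgen : Subgroup.closure (φ '' Set.range (PresentedGroup.of : Fin 3 → Gmn m n)) = ⊤ := by
    rw [← MonoidHom.map_closure]
    have htop : Subgroup.closure (G := Gmn m n) (Set.range (PresentedGroup.of : Fin 3 → Gmn m n)) = ⊤ :=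
      PresentedGroup.closure_range_of (GmnRels m n)
    rw [htop, ← MonoidHom.range_eq_map]
    exact MonoidHom.range_eq_top.mpr (QuotientGroup.mk'_surjective _)
  -- images of generators pairwise commute
  have hbase : ∀ a ∈ φ '' Set.range (PresentedGroup.of : Fin 3 → Gmn m n),
      ∀ b ∈ φ '' Set.range (PresentedGroup.of : Fin 3 → Gmn m n), a * b = b * a := by
    have key : ∀ a b : Gmn m n, ⁅a, b⁆ ∈ H m n → φ a * φ b = φ b * φ a := by
      intro a b hab
      have h1 : φ ⁅a, b⁆ = 1 := (QuotientGroup.eq_one_iff _).mpr hab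
      rw [map_commutatorElement] at h1
      exact commutatorElement_eq_one_iff_mul_comm.mp h1
    rintro _ ⟨_, ⟨i, rfl⟩, rfl⟩ _ ⟨_, ⟨j, rfl⟩, rfl⟩
    exact key _ _ (comm_gen_mem m n i j)
  have hq : ∀ a b : Gmn m n ⧸ H m n, a * b = b * a := by
    intro a b
    exact closure_comm hbase a (by rw [hgen]; trivial) b (by rw [hgen]; trivial)
  rw [commutator_def, Subgroup.commutator_le]
  intro x _ y _
  have : φ ⁅x, y⁆ = 1 := by
    rw [map_commutatorElement]
    exact commutatorElement_eq_one_iff_mul_comm.mpr (hq _ _)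
  exact (QuotientGroup.eq_one_iff _).mp this

lemma H_le_commutator : H m n ≤ commutator (Gmn m n) := by
  rw [commutator_def]
  apply Subgroup.closure_le _ |>.mpr
  rintro s hs
  simp only [Set.mem_insert_iff, Set.mem_singleton_iff] at hs
  rcases hs with rfl | rfl
  · have : Gσ m n ^ 2 = ⁅(Gρ m n)⁻¹, (Gσ m n)⁻¹⁆ := by
      rw [commutatorElement_def, inv_inv, inv_inv, hρσ]
    rw [this]
    exact Subgroup.commutator_mem_commutator (Subgroup.mem_top _) (Subgroup.mem_top _)
  · have : Gτ m n ^ 2 = ⁅(Gρ m n)⁻¹, (Gτ m n)⁻¹⁆ := by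
      rw [commutatorElement_def, inv_inv, inv_inv, hρτ]
    rw [this]
    exact Subgroup.commutator_mem_commutator (Subgroup.mem_top _) (Subgroup.mem_top _)

lemma H_comm : ∀ x ∈ H m n, ∀ y ∈ H m n, x * y = y * x := by
  apply closure_comm
  intro a ha b hb
  simp only [Set.mem_insert_iff, Set.mem_singleton_iff] at ha hb
  have c : Commute (Gσ m n ^ 2) (Gτ m n ^ 2) := (hστ m n).pow_pow 2 2
  rcases ha with rfl | rfl <;> rcases hb with rfl | rfl
  · rfl
  · exact c
  · exact c.symm
  · rfl

end GmnAux

/-- The commutator subgroup of `G_{m,n}` is generated by σ² and τ², this subgroup is abelian,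
and consequently `G_{m,n}` is metabelian. -/
theorem stmt4 (m n : ℕ) (hm : 1 ≤ m) (hn : 1 ≤ n) :
    commutator (Gmn m n) = Subgroup.closure {Gσ m n ^ 2, Gτ m n ^ 2} ∧
    (∀ x y, x ∈ Subgroup.closure {Gσ m n ^ 2, Gτ m n ^ 2} →
      y ∈ Subgroup.closure {Gσ m n ^ 2, Gτ m n ^ 2} → x * y = y * x) ∧
    ⁅commutator (Gmn m n), commutator (Gmn m n)⁆ = ⊥ := by
  have h1 : commutator (Gmn m n) = Subgroup.closure {Gσ m n ^ 2, Gτ m n ^ 2} :=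
    le_antisymm (GmnAux.commutator_le_H m n) (GmnAux.H_le_commutator m n)
  have h2 : ∀ x y, x ∈ Subgroup.closure {Gσ m n ^ 2, Gτ m n ^ 2} →
      y ∈ Subgroup.closure {Gσ m n ^ 2, Gτ m n ^ 2} → x * y = y * x :=
    fun x y hx hy => GmnAux.H_comm m n x hx y hy
  refine ⟨h1, h2, ?_⟩
  rw [h1]
  refine le_bot_iff.mp (Subgroup.commutator_le.mpr fun a ha b hb => ?_)
  rw [Subgroup.mem_bot]
  exact commutatorElement_eq_one_iff_mul_comm.mpr (h2 a b ha hb)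
end

section
/- The group G_{m,n} = ⟨ρ,σ,τ | ρ^4 = σ^{2^{n+1}} = τ^{2^{m+1}} = 1, ρ² = σ^{2^n}, [ρ,σ] = σ², [ρ,τ] = τ², [σ,τ] = 1⟩ has order 2^{m+n+3}. -/
namespace Stmt6Aux


structure K (m n : ℕ) where
  a : ZMod 2
  b : ZMod (2 ^ (n + 1))
  c : ZMod (2 ^ (m + 1))

namespace K

variable {m n : ℕ}

instance : Mul (K m n) :=
  ⟨fun x y => ⟨x.a + y.a,
    y.b + (if y.a = 0 then x.b else -x.b) + (if x.a = 1 ∧ y.a = 1 then (2 ^ n : ZMod (2 ^ (n+1))) else 0),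
    y.c + (if y.a = 0 then x.c else -x.c)⟩⟩

instance : One (K m n) := ⟨⟨0, 0, 0⟩⟩

instance : Inv (K m n) :=
  ⟨fun x => if x.a = 0 then ⟨0, -x.b, -x.c⟩ else ⟨1, x.b - 2 ^ n, x.c⟩⟩

theorem mul_def (x y : K m n) : x * y = ⟨x.a + y.a,
    y.b + (if y.a = 0 then x.b else -x.b) + (if x.a = 1 ∧ y.a = 1 then (2 ^ n : ZMod (2 ^ (n+1))) else 0),
    y.c + (if y.a = 0 then x.c else -x.c)⟩ := rfl

theorem one_def : (1 : K m n) = ⟨0, 0, 0⟩ := rfl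

theorem inv_def (x : K m n) :
    x⁻¹ = if x.a = 0 then ⟨0, -x.b, -x.c⟩ else ⟨1, x.b - 2 ^ n, x.c⟩ := rfl

theorem key : (2 ^ n : ZMod (2 ^ (n+1))) + 2 ^ n = 0 := by
  have : ((2 ^ (n+1) : ℕ) : ZMod (2 ^ (n+1))) = 0 := ZMod.natCast_self _
  push_cast at this
  rw [pow_succ] at this
  rw [← two_mul, ← pow_succ']; exact_mod_cast ZMod.natCast_self (2 ^ (n + 1))

theorem zmod2_cases (x : ZMod 2) : x = 0 ∨ x = 1 := by revert x; decide

set_option maxHeartbeats 1000000 in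
theorem kassoc (x y z : K m n) : x * y * z = x * (y * z) := by
    obtain ⟨a₁, b₁, c₁⟩ := x
    obtain ⟨a₂, b₂, c₂⟩ := y
    obtain ⟨a₃, b₃, c₃⟩ := z
    rcases zmod2_cases a₁ with h₁ | h₁ <;> rcases zmod2_cases a₂ with h₂ | h₂ <;>
      rcases zmod2_cases a₃ with h₃ | h₃ <;>
      subst h₁ h₂ h₃ <;>
      simp only [mul_def, K.mk.injEq, show ((1:ZMod 2)+1) = 0 from by decide,
        show ((0:ZMod 2)+1) = 1 from by decide, show ((1:ZMod 2)+0) = 1 from by decide,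
        show ((0:ZMod 2)+0) = 0 from by decide, show (1:ZMod 2) ≠ 0 from by decide,
        show ¬((0:ZMod 2) = 1) from by decide, if_true, if_false, eq_self_iff_true,
        true_and, and_true, false_and, and_false, ite_true, ite_false, not_false_iff] <;>
      constructor <;>
      first
        | ring1
        | linear_combination (key (n := n))
        | linear_combination -(key (n := n))
set_option maxHeartbeats 1000000 in
theorem kone_mul (x : K m n) : 1 * x = x := by
    obtain ⟨a, b, c⟩ := x
    rcases zmod2_cases a with h | h <;> subst h <;>
      simp only [mul_def, one_def, K.mk.injEq, show ((0:ZMod 2)+1) = 1 from by decide,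
        show ((0:ZMod 2)+0) = 0 from by decide, show (1:ZMod 2) ≠ 0 from by decide,
        show ¬((0:ZMod 2) = 1) from by decide, if_true, if_false, eq_self_iff_true,
        true_and, and_true, false_and, and_false, ite_true, ite_false, not_false_iff] <;>
      constructor <;> ring
set_option maxHeartbeats 1000000 in
theorem kmul_one (x : K m n) : x * 1 = x := by
    obtain ⟨a, b, c⟩ := x
    rcases zmod2_cases a with h | h <;> subst h <;>
      simp only [mul_def, one_def, K.mk.injEq, show ((1:ZMod 2)+0) = 1 from by decide,
        show ((0:ZMod 2)+0) = 0 from by decide, show (1:ZMod 2) ≠ 0 from by decide,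
        show ¬((0:ZMod 2) = 1) from by decide, if_true, if_false, eq_self_iff_true,
        true_and, and_true, false_and, and_false, ite_true, ite_false, not_false_iff] <;>
      constructor <;> ring
set_option maxHeartbeats 1000000 in
theorem kinv_mul (x : K m n) : x⁻¹ * x = 1 := by
    obtain ⟨a, b, c⟩ := x
    rcases zmod2_cases a with h | h <;> subst h <;>
      simp only [inv_def, mul_def, one_def, show (1:ZMod 2) ≠ 0 from by decide,
        show ((1:ZMod 2)+1) = 0 from by decide, show ((0:ZMod 2)+0) = 0 from by decide,
        show ¬((0:ZMod 2) = 1) from by decide, true_and, and_true, and_self, false_and,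
        if_true, if_false, eq_self_iff_true, ite_true, ite_false, K.mk.injEq, not_false_iff] <;>
      constructor <;>
      first
        | ring1
        | (constructor <;> first | ring1 | linear_combination (key (n := n)))
        | linear_combination (key (n := n))

instance : Group (K m n) where
  mul_assoc := kassoc
  one_mul := kone_mul
  mul_one := kmul_one
  inv_mul_cancel := kinv_mul

def ρK : K m n := ⟨1, 0, 0⟩
def σK : K m n := ⟨0, 1, 0⟩
def τK : K m n := ⟨0, 0, 1⟩

def kEquiv : K m n ≃ ZMod 2 × ZMod (2 ^ (n + 1)) × ZMod (2 ^ (m + 1)) where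
  toFun x := (x.a, x.b, x.c)
  invFun p := ⟨p.1, p.2.1, p.2.2⟩
  left_inv x := rfl
  right_inv p := rfl

theorem card_K : Nat.card (K m n) = 2 ^ (m + n + 3) := by
  rw [Nat.card_congr (kEquiv (m := m) (n := n)), Nat.card_prod, Nat.card_prod,
    Nat.card_zmod, Nat.card_zmod, Nat.card_zmod]
  rw [← pow_add, ← pow_succ']
  ring_nf

theorem sq_ρK : (ρK : K m n) ^ 2 = ⟨0, 2 ^ n, 0⟩ := by
  rw [pow_two]
  simp [ρK, mul_def, show ((1:ZMod 2)+1) = 0 from by decide]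

theorem pow_σK (k : ℕ) : (σK : K m n) ^ k = ⟨0, (k : ZMod (2 ^ (n + 1))), 0⟩ := by
  induction k with
  | zero => simp [one_def]
  | succ k ih =>
      rw [pow_succ, ih]
      simp only [σK, mul_def, show ((0:ZMod 2)+0) = 0 from by decide,
        eq_self_iff_true, if_true, ite_true, and_false, false_and, if_false, ite_false]
      norm_num
      push_cast
      ring

theorem pow_τK (k : ℕ) : (τK : K m n) ^ k = ⟨0, 0, (k : ZMod (2 ^ (m + 1)))⟩ := by
  induction k with
  | zero => simp [one_def]
  | succ k ih =>
      rw [pow_succ, ih]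
      simp only [τK, mul_def, show ((0:ZMod 2)+0) = 0 from by decide,
        eq_self_iff_true, if_true, ite_true, and_false, false_and, if_false, ite_false]
      norm_num
      push_cast
      ring

theorem ρK4 : (ρK : K m n) ^ 4 = 1 := by
  have : (ρK : K m n) ^ 4 = (ρK ^ 2) ^ 2 := by rw [← pow_mul]
  rw [this, sq_ρK, pow_two, one_def]
  simp only [mul_def, show ((0:ZMod 2)+0) = 0 from by decide, eq_self_iff_true, if_true,
    ite_true, and_false, false_and, if_false, ite_false, K.mk.injEq, true_and,
    show ¬((0:ZMod 2) = 1) from by decide, false_and]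
  norm_num
  linear_combination (key (n := n))

end K



variable {m n : ℕ}

private theorem relquot (x : FreeGroup (Fin 3)) (hx : x ∈ GmnRels m n) :
    PresentedGroup.mk (GmnRels m n) x = 1 :=
  (QuotientGroup.eq_one_iff x).mpr (Subgroup.subset_normalClosure hx)

theorem hρ4 : (Gρ m n) ^ 4 = 1 := by
  have h := relquot (m := m) (n := n) (FreeGroup.of 0 ^ 4) (by simp [GmnRels])
  rw [map_pow] at h
  exact h

theorem hσord : (Gσ m n) ^ (2 ^ (n + 1)) = 1 := by
  have h := relquot (m := m) (n := n) (FreeGroup.of 1 ^ (2 ^ (n + 1))) (by simp [GmnRels])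
  rw [map_pow] at h
  exact h

theorem hτord : (Gτ m n) ^ (2 ^ (m + 1)) = 1 := by
  have h := relquot (m := m) (n := n) (FreeGroup.of 2 ^ (2 ^ (m + 1))) (by simp [GmnRels])
  rw [map_pow] at h
  exact h

theorem hρσ : (Gρ m n) ^ 2 = (Gσ m n) ^ (2 ^ n) := by
  have h := relquot (m := m) (n := n) (FreeGroup.of 0 ^ 2 * (FreeGroup.of 1 ^ (2 ^ n))⁻¹)
    (by simp [GmnRels])
  rw [map_mul, map_inv, map_pow, map_pow, mul_inv_eq_one] at h
  exact h

theorem hρσc : (Gρ m n)⁻¹ * (Gσ m n)⁻¹ * Gρ m n * Gσ m n = (Gσ m n) ^ 2 := by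
  have h := relquot (m := m) (n := n)
    ((FreeGroup.of 0)⁻¹ * (FreeGroup.of 1)⁻¹ * FreeGroup.of 0 * FreeGroup.of 1 *
      (FreeGroup.of 1 ^ 2)⁻¹) (by simp [GmnRels])
  rw [map_mul, map_mul, map_mul, map_mul, map_inv, map_inv, map_inv, map_pow,
    mul_inv_eq_one] at h
  exact h

theorem hρτc : (Gρ m n)⁻¹ * (Gτ m n)⁻¹ * Gρ m n * Gτ m n = (Gτ m n) ^ 2 := by
  have h := relquot (m := m) (n := n)
    ((FreeGroup.of 0)⁻¹ * (FreeGroup.of 2)⁻¹ * FreeGroup.of 0 * FreeGroup.of 2 *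
      (FreeGroup.of 2 ^ 2)⁻¹) (by simp [GmnRels])
  rw [map_mul, map_mul, map_mul, map_mul, map_inv, map_inv, map_inv, map_pow,
    mul_inv_eq_one] at h
  exact h

theorem hστ : Commute (Gσ m n) (Gτ m n) := by
  have h := relquot (m := m) (n := n)
    ((FreeGroup.of 1)⁻¹ * (FreeGroup.of 2)⁻¹ * FreeGroup.of 1 * FreeGroup.of 2)
    (by simp [GmnRels])
  rw [map_mul, map_mul, map_mul, map_inv, map_inv] at h
  have h0 : (Gσ m n)⁻¹ * (Gτ m n)⁻¹ * Gσ m n * Gτ m n = 1 := h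
  have h1 := congrArg (fun x => Gτ m n * Gσ m n * x) h0
  exact (by simpa [mul_assoc] using h1 : Gσ m n * Gτ m n = Gτ m n * Gσ m n)

/-- conjugation by ρ inverts σ -/
theorem conjσ : (Gρ m n)⁻¹ * Gσ m n * Gρ m n = (Gσ m n)⁻¹ := by
  have e1 := hρσc (m := m) (n := n)
  rw [pow_two] at e1
  have e2 : (Gρ m n)⁻¹ * (Gσ m n)⁻¹ * Gρ m n = Gσ m n := mul_right_cancel e1
  have := congrArg Inv.inv e2
  simpa [mul_inv_rev, mul_assoc] using this

theorem conjτ : (Gρ m n)⁻¹ * Gτ m n * Gρ m n = (Gτ m n)⁻¹ := by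
  have e1 := hρτc (m := m) (n := n)
  rw [pow_two] at e1
  have e2 : (Gρ m n)⁻¹ * (Gτ m n)⁻¹ * Gρ m n = Gτ m n := mul_right_cancel e1
  have := congrArg Inv.inv e2
  simpa [mul_inv_rev, mul_assoc] using this

theorem conjσz (b : ℤ) : (Gρ m n)⁻¹ * (Gσ m n) ^ b * Gρ m n = (Gσ m n) ^ (-b) := by
  have h := conj_zpow (i := b) (a := (Gρ m n)⁻¹) (b := Gσ m n)
  rw [inv_inv] at h
  rw [← h, conjσ, inv_zpow, zpow_neg]

theorem conjτz (c : ℤ) : (Gρ m n)⁻¹ * (Gτ m n) ^ c * Gρ m n = (Gτ m n) ^ (-c) := by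
  have h := conj_zpow (i := c) (a := (Gρ m n)⁻¹) (b := Gτ m n)
  rw [inv_inv] at h
  rw [← h, conjτ, inv_zpow, zpow_neg]

theorem commρ2σ : Commute ((Gρ m n) ^ 2) (Gσ m n) := by
  rw [hρσ]; exact (Commute.refl (Gσ m n)).pow_left _

theorem commρ2τ : Commute ((Gρ m n) ^ 2) (Gτ m n) := by
  rw [hρσ]; exact (hστ (m := m) (n := n)).pow_left _

/-- sign of conjugation by `ρ^a` -/
def ε (a : ℤ) : ℤ := if a % 2 = 0 then 1 else -1

theorem σρz (a b : ℤ) :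
    (Gσ m n) ^ b * (Gρ m n) ^ a = (Gρ m n) ^ a * (Gσ m n) ^ (ε a * b) := by
  have hsplit : (Gρ m n) ^ a = ((Gρ m n) ^ 2) ^ (a / 2) * (Gρ m n) ^ (a % 2) := by
    rw [← zpow_natCast ((Gρ m n)) 2]
    rw [← zpow_mul, ← zpow_add]
    norm_num [Int.mul_ediv_add_emod]
  have hcz : Commute ((Gσ m n) ^ b) (((Gρ m n) ^ 2) ^ (a / 2)) :=
    ((commρ2σ (m := m) (n := n)).symm.zpow_zpow b (a / 2))
  rcases Int.emod_two_eq a with h | h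
  · rw [ε, if_pos h, one_mul, hsplit, h, zpow_zero, mul_one]
    exact hcz.eq
  · rw [ε, if_neg (by rw [h]; norm_num), neg_one_mul, hsplit, h, zpow_one]
    have hb : (Gσ m n) ^ b * Gρ m n = Gρ m n * (Gσ m n) ^ (-b) := by
      have := conjσz (m := m) (n := n) b
      calc (Gσ m n) ^ b * Gρ m n = Gρ m n * ((Gρ m n)⁻¹ * (Gσ m n) ^ b * Gρ m n) := by
            group
        _ = Gρ m n * (Gσ m n) ^ (-b) := by rw [this]
    rw [← mul_assoc, hcz.eq, mul_assoc, hb, ← mul_assoc]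

theorem τρz (a c : ℤ) :
    (Gτ m n) ^ c * (Gρ m n) ^ a = (Gρ m n) ^ a * (Gτ m n) ^ (ε a * c) := by
  have hsplit : (Gρ m n) ^ a = ((Gρ m n) ^ 2) ^ (a / 2) * (Gρ m n) ^ (a % 2) := by
    rw [← zpow_natCast ((Gρ m n)) 2]
    rw [← zpow_mul, ← zpow_add]
    norm_num [Int.mul_ediv_add_emod]
  have hcz : Commute ((Gτ m n) ^ c) (((Gρ m n) ^ 2) ^ (a / 2)) :=
    ((commρ2τ (m := m) (n := n)).symm.zpow_zpow c (a / 2))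
  rcases Int.emod_two_eq a with h | h
  · rw [ε, if_pos h, one_mul, hsplit, h, zpow_zero, mul_one]
    exact hcz.eq
  · rw [ε, if_neg (by rw [h]; norm_num), neg_one_mul, hsplit, h, zpow_one]
    have hb : (Gτ m n) ^ c * Gρ m n = Gρ m n * (Gτ m n) ^ (-c) := by
      have := conjτz (m := m) (n := n) c
      calc (Gτ m n) ^ c * Gρ m n = Gρ m n * ((Gρ m n)⁻¹ * (Gτ m n) ^ c * Gρ m n) := by
            group
        _ = Gρ m n * (Gτ m n) ^ (-c) := by rw [this]
    rw [← mul_assoc, hcz.eq, mul_assoc, hb, ← mul_assoc]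

theorem στz (b c : ℤ) : Commute ((Gσ m n) ^ b) ((Gτ m n) ^ c) :=
  (hστ (m := m) (n := n)).zpow_zpow b c

theorem σρz' (x : Gmn m n) (a b : ℤ) :
    x * (Gσ m n) ^ b * (Gρ m n) ^ a = x * (Gρ m n) ^ a * (Gσ m n) ^ (ε a * b) := by
  rw [mul_assoc, σρz, ← mul_assoc]

theorem τρz' (x : Gmn m n) (a c : ℤ) :
    x * (Gτ m n) ^ c * (Gρ m n) ^ a = x * (Gρ m n) ^ a * (Gτ m n) ^ (ε a * c) := by
  rw [mul_assoc, τρz, ← mul_assoc]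

theorem τσz' (x : Gmn m n) (b c : ℤ) :
    x * (Gτ m n) ^ c * (Gσ m n) ^ b = x * (Gσ m n) ^ b * (Gτ m n) ^ c := by
  rw [mul_assoc, ((στz b c).symm.eq : (Gτ m n) ^ c * (Gσ m n) ^ b = _), ← mul_assoc]

theorem σcomb (x : Gmn m n) (p q : ℤ) :
    x * (Gσ m n) ^ p * (Gσ m n) ^ q = x * (Gσ m n) ^ (p + q) := by
  rw [mul_assoc, ← zpow_add]

theorem τcomb (x : Gmn m n) (p q : ℤ) :
    x * (Gτ m n) ^ p * (Gτ m n) ^ q = x * (Gτ m n) ^ (p + q) := by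
  rw [mul_assoc, ← zpow_add]

/-- every element has the normal form `ρ^a σ^b τ^c` with integer exponents -/
theorem exists_norm (g : Gmn m n) :
    ∃ a b c : ℤ, g = (Gρ m n) ^ a * (Gσ m n) ^ b * (Gτ m n) ^ c := by
  induction g using PresentedGroup.induction_on with
  | H z =>
    induction z using FreeGroup.induction_on with
    | C1 => exact ⟨0, 0, 0, by simp; rfl⟩
    | of x =>
      fin_cases x
      · exact ⟨1, 0, 0, by simp [Gρ, PresentedGroup.of]; rfl⟩
      · exact ⟨0, 1, 0, by simp [Gσ, PresentedGroup.of]; rfl⟩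
      · exact ⟨0, 0, 1, by simp [Gτ, PresentedGroup.of]; rfl⟩
    | inv_of x _ =>
      fin_cases x
      · exact ⟨-1, 0, 0, by simp [Gρ, PresentedGroup.of]; rfl⟩
      · exact ⟨0, -1, 0, by simp [Gσ, PresentedGroup.of]; rfl⟩
      · exact ⟨0, 0, -1, by simp [Gτ, PresentedGroup.of]; rfl⟩
    | mul x y hx hy =>
      obtain ⟨a, b, c, hx⟩ := hx
      obtain ⟨a', b', c', hy⟩ := hy
      refine ⟨a + a', ε a' * b + b', ε a' * c + c', ?_⟩
      rw [map_mul, hx, hy]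
      show ((Gρ m n ^ a * Gσ m n ^ b * Gτ m n ^ c : Gmn m n) * (Gρ m n ^ a' * Gσ m n ^ b' * Gτ m n ^ c') : Gmn m n) = _
      simp only [← mul_assoc]
      rw [τρz', σρz', τσz', σcomb, τcomb, zpow_add (Gρ m n) a a']


def fFin (m n : ℕ) : Fin 2 × Fin (2 ^ (n + 1)) × Fin (2 ^ (m + 1)) → Gmn m n := fun p =>
  (Gρ m n) ^ (p.1.val) * (Gσ m n) ^ (p.2.1.val) * (Gτ m n) ^ (p.2.2.val)

theorem σmod (b : ℤ) : (Gσ m n) ^ b = (Gσ m n) ^ (b % ((2 ^ (n + 1) : ℕ) : ℤ)) :=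
  zpow_eq_zpow_emod' b hσord

theorem τmod (c : ℤ) : (Gτ m n) ^ c = (Gτ m n) ^ (c % ((2 ^ (m + 1) : ℕ) : ℤ)) :=
  zpow_eq_zpow_emod' c hτord

theorem fFin_surj : Function.Surjective (fFin m n) := by
  intro g
  obtain ⟨a, b, c, rfl⟩ := exists_norm g
  have hsplit : (Gρ m n) ^ a = (Gρ m n) ^ (a % 2) * ((Gρ m n) ^ 2) ^ (a / 2) := by
    rw [← zpow_natCast (Gρ m n) 2, ← zpow_mul, ← zpow_add]
    norm_num [Int.emod_add_mul_ediv]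
  have h2 : ((Gρ m n) ^ 2) ^ (a / 2) = (Gσ m n) ^ ((2 ^ n : ℕ) * (a / 2) : ℤ) := by
    rw [hρσ, ← zpow_natCast (Gσ m n) (2 ^ n), ← zpow_mul]
  have hB : (Gρ m n) ^ a * (Gσ m n) ^ b * (Gτ m n) ^ c =
      (Gρ m n) ^ (a % 2) * (Gσ m n) ^ (((2 ^ n : ℕ) * (a / 2) : ℤ) + b) * (Gτ m n) ^ c := by
    rw [hsplit, h2, σcomb]
  have hb1 : (0 : ℤ) < ((2 ^ (n + 1) : ℕ) : ℤ) := by positivity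
  have hb2 : (0 : ℤ) < ((2 ^ (m + 1) : ℕ) : ℤ) := by positivity
  set B : ℤ := ((2 ^ n : ℕ) * (a / 2) : ℤ) + b with hBdef
  have ha0 : 0 ≤ a % 2 := Int.emod_nonneg a (by norm_num)
  have ha1 : a % 2 < 2 := Int.emod_lt_of_pos a (by norm_num)
  have hB0 : 0 ≤ B % ((2 ^ (n + 1) : ℕ) : ℤ) := Int.emod_nonneg B (by positivity)
  have hB1 : B % ((2 ^ (n + 1) : ℕ) : ℤ) < ((2 ^ (n + 1) : ℕ) : ℤ) := Int.emod_lt_of_pos B hb1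
  have hc0 : 0 ≤ c % ((2 ^ (m + 1) : ℕ) : ℤ) := Int.emod_nonneg c (by positivity)
  have hc1 : c % ((2 ^ (m + 1) : ℕ) : ℤ) < ((2 ^ (m + 1) : ℕ) : ℤ) := Int.emod_lt_of_pos c hb2
  refine ⟨⟨⟨(a % 2).toNat, by omega⟩, ⟨(B % ((2 ^ (n + 1) : ℕ) : ℤ)).toNat, by omega⟩,
    ⟨(c % ((2 ^ (m + 1) : ℕ) : ℤ)).toNat, by omega⟩⟩, ?_⟩
  show (Gρ m n) ^ ((a % 2).toNat) * (Gσ m n) ^ ((B % ((2 ^ (n + 1) : ℕ) : ℤ)).toNat) *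
      (Gτ m n) ^ ((c % ((2 ^ (m + 1) : ℕ) : ℤ)).toNat) = _
  rw [← zpow_natCast (Gρ m n), ← zpow_natCast (Gσ m n), ← zpow_natCast (Gτ m n),
    Int.toNat_of_nonneg ha0, Int.toNat_of_nonneg hB0, Int.toNat_of_nonneg hc0,
    ← σmod, ← τmod, hB]

theorem finiteG : Finite (Gmn m n) := Finite.of_surjective _ (fFin_surj (m := m) (n := n))

theorem cardG_le : Nat.card (Gmn m n) ≤ 2 ^ (m + n + 3) := by
  have h := Nat.card_le_card_of_surjective _ (fFin_surj (m := m) (n := n))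
  rw [Nat.card_prod, Nat.card_prod, Nat.card_eq_fintype_card (α := Fin 2),
    Nat.card_eq_fintype_card (α := Fin (2 ^ (n + 1))),
    Nat.card_eq_fintype_card (α := Fin (2 ^ (m + 1))), Fintype.card_fin, Fintype.card_fin,
    Fintype.card_fin] at h
  calc Nat.card (Gmn m n) ≤ 2 * (2 ^ (n + 1) * 2 ^ (m + 1)) := h
    _ = 2 ^ (m + n + 3) := by ring

open K in
def fK (m n : ℕ) : Fin 3 → K m n := ![ρK, σK, τK]

open K in
theorem liftK : ∀ rl ∈ GmnRels m n, FreeGroup.lift (fK m n) rl = 1 := by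
  have hne : NeZero (2 ^ (n + 1)) := ⟨pow_ne_zero _ (by norm_num)⟩
  intro rl hrl
  simp only [GmnRels, Set.mem_insert_iff, Set.mem_singleton_iff] at hrl
  have h0 : FreeGroup.lift (fK m n) (FreeGroup.of 0) = ρK := FreeGroup.lift_apply_of
  have h1 : FreeGroup.lift (fK m n) (FreeGroup.of 1) = σK := FreeGroup.lift_apply_of
  have h2 : FreeGroup.lift (fK m n) (FreeGroup.of 2) = τK := FreeGroup.lift_apply_of
  rcases hrl with rfl | rfl | rfl | rfl | rfl | rfl | rfl
  · rw [map_pow, h0]; exact ρK4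
  · rw [map_pow, h1, pow_σK, ZMod.natCast_self, one_def]
  · rw [map_pow, h2, pow_τK, ZMod.natCast_self, one_def]
  · rw [map_mul, map_inv, map_pow, map_pow, h0, h1, mul_inv_eq_one, sq_ρK, pow_σK]
    have : ((2 ^ n : ℕ) : ZMod (2 ^ (n + 1))) = (2 : ZMod (2 ^ (n + 1))) ^ n := by push_cast; ring
    rw [this]
  · simp only [map_mul, map_inv, map_pow, h0, h1, mul_inv_eq_one]
    rw [show (ρK : K m n)⁻¹ * σK⁻¹ * ρK * σK = σK ^ 2 from ?_]
    rw [pow_two]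
    simp only [ρK, σK, mul_def, inv_def, one_def, show (1 : ZMod 2) ≠ 0 from by decide,
      show ¬((0 : ZMod 2) = 1) from by decide, show ((1 : ZMod 2) + 0) = 1 from by decide,
      show ((1 : ZMod 2) + 1) = 0 from by decide, show ((0 : ZMod 2) + 0) = 0 from by decide,
      show ((0 : ZMod 2) + 1) = 1 from by decide, if_true, if_false, ite_true, ite_false,
      eq_self_iff_true, true_and, and_true, false_and, and_false, K.mk.injEq, not_false_iff]
    norm_num
    linear_combination (key (n := n))
  · simp only [map_mul, map_inv, map_pow, h0, h2, mul_inv_eq_one]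
    rw [show (ρK : K m n)⁻¹ * τK⁻¹ * ρK * τK = τK ^ 2 from ?_]
    rw [pow_two]
    simp only [ρK, τK, mul_def, inv_def, one_def, show (1 : ZMod 2) ≠ 0 from by decide,
      show ¬((0 : ZMod 2) = 1) from by decide, show ((1 : ZMod 2) + 0) = 1 from by decide,
      show ((1 : ZMod 2) + 1) = 0 from by decide, show ((0 : ZMod 2) + 0) = 0 from by decide,
      show ((0 : ZMod 2) + 1) = 1 from by decide, if_true, if_false, ite_true, ite_false,
      eq_self_iff_true, true_and, and_true, false_and, and_false, K.mk.injEq, not_false_iff]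
    norm_num
    linear_combination (key (n := n))
  · simp only [map_mul, map_inv, h1, h2]
    simp only [σK, τK, mul_def, inv_def, one_def, show (1 : ZMod 2) ≠ 0 from by decide,
      show ¬((0 : ZMod 2) = 1) from by decide,
      show ((0 : ZMod 2) + 0) = 0 from by decide, if_true, if_false, ite_true, ite_false,
      eq_self_iff_true, true_and, and_true, false_and, and_false, K.mk.injEq, not_false_iff]
    norm_num

open K in
noncomputable def φK (m n : ℕ) : Gmn m n →* K m n := PresentedGroup.toGroup (liftK (m := m) (n := n))

open K in
theorem φK_surj : Function.Surjective (φK m n) := by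
  haveI : NeZero (2 ^ (n + 1)) := ⟨pow_ne_zero _ (by norm_num)⟩
  haveI : NeZero (2 ^ (m + 1)) := ⟨pow_ne_zero _ (by norm_num)⟩
  have hρ : φK m n (Gρ m n) = ρK := PresentedGroup.toGroup.of _
  have hσ : φK m n (Gσ m n) = σK := PresentedGroup.toGroup.of _
  have hτ : φK m n (Gτ m n) = τK := PresentedGroup.toGroup.of _
  intro x
  obtain ⟨a, b, c⟩ := x
  have hx : (⟨a, b, c⟩ : K m n) = ρK ^ a.val * σK ^ b.val * τK ^ c.val := by
    rw [pow_σK, pow_τK, ZMod.natCast_val, ZMod.natCast_val, ZMod.cast_id, ZMod.cast_id]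
    rcases zmod2_cases a with h | h <;> subst h
    · rw [show (0 : ZMod 2).val = 0 from rfl, pow_zero, one_mul]
      simp only [mul_def, show ((0 : ZMod 2) + 0) = 0 from by decide, eq_self_iff_true,
        if_true, ite_true, and_false, false_and, if_false, ite_false, K.mk.injEq]
      norm_num
    · rw [show (1 : ZMod 2).val = 1 from rfl, pow_one]
      simp only [ρK, mul_def, show ((1 : ZMod 2) + 0) = 1 from by decide,
        show ((0 : ZMod 2) + 0) = 0 from by decide, show (1 : ZMod 2) ≠ 0 from by decide,
        show ¬((0 : ZMod 2) = 1) from by decide, if_true, if_false, ite_true, ite_false,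
        eq_self_iff_true, true_and, and_true, false_and, and_false, K.mk.injEq, not_false_iff]
      norm_num
  rw [hx]
  exact ⟨(Gρ m n) ^ a.val * (Gσ m n) ^ b.val * (Gτ m n) ^ c.val, by
    rw [map_mul, map_mul, map_pow, map_pow, map_pow, hρ, hσ, hτ]⟩

theorem cardG_ge : 2 ^ (m + n + 3) ≤ Nat.card (Gmn m n) := by
  haveI := finiteG (m := m) (n := n)
  have h := Nat.card_le_card_of_surjective _ (φK_surj (m := m) (n := n))
  rw [K.card_K] at h
  exact h

end Stmt6Aux

/-- The group `G_{m,n}` has order `2^{m+n+3}`. -/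
theorem stmt6 (m n : ℕ) (hm : 1 ≤ m) (hn : 1 ≤ n) :
    Nat.card (Gmn m n) = 2 ^ (m + n + 3) := by
  exact le_antisymm Stmt6Aux.cardG_le Stmt6Aux.cardG_ge
end

section
/- For the group G = G_{m,n} with presentation ⟨ρ,σ,τ | ρ^4 = σ^{2^{n+1}} = τ^{2^{m+1}} = 1, ρ² = σ^{2^n}, [ρ,σ] = σ², [ρ,τ] = τ², [σ,τ] = 1⟩, the derived subgroup G' = ⟨σ², τ²⟩ is isomorphic to Z/2^n × Z/2^m. -/
namespace Stmt14

variable (m n : ℕ)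

def π : FreeGroup (Fin 3) →* Gmn m n := PresentedGroup.mk (GmnRels m n)

lemma rel_one {r : FreeGroup (Fin 3)} (hr : r ∈ GmnRels m n) : π m n r = 1 :=
  (QuotientGroup.eq_one_iff _).mpr (Subgroup.subset_normalClosure hr)

lemma pi_of (i : Fin 3) : π m n (FreeGroup.of i) = PresentedGroup.of i := rfl

lemma hρ4 : (Gρ m n) ^ 4 = 1 := by
  have := rel_one m n (r := FreeGroup.of 0 ^ 4) (by simp [GmnRels])
  simpa [map_pow, pi_of, Gρ] using this

lemma hσ : (Gσ m n) ^ (2 ^ (n + 1)) = 1 := by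
  have := rel_one m n (r := FreeGroup.of 1 ^ (2 ^ (n + 1))) (by simp [GmnRels])
  simpa [map_pow, pi_of, Gσ] using this

lemma hτ : (Gτ m n) ^ (2 ^ (m + 1)) = 1 := by
  have := rel_one m n (r := FreeGroup.of 2 ^ (2 ^ (m + 1))) (by simp [GmnRels])
  simpa [map_pow, pi_of, Gτ] using this

lemma hρ2 : (Gρ m n) ^ 2 = (Gσ m n) ^ (2 ^ n) := by
  have := rel_one m n (r := FreeGroup.of 0 ^ 2 * (FreeGroup.of 1 ^ (2 ^ n))⁻¹)
    (by simp [GmnRels])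
  simp only [map_mul, map_inv, map_pow, pi_of] at this
  rw [mul_inv_eq_one] at this
  simpa [Gρ, Gσ] using this

lemma hρσ : (Gρ m n)⁻¹ * (Gσ m n)⁻¹ * Gρ m n * Gσ m n = (Gσ m n) ^ 2 := by
  have := rel_one m n (r := (FreeGroup.of 0)⁻¹ * (FreeGroup.of 1)⁻¹ * FreeGroup.of 0 *
    FreeGroup.of 1 * (FreeGroup.of 1 ^ 2)⁻¹) (by simp [GmnRels])
  simp only [map_mul, map_inv, map_pow, pi_of] at this
  rw [mul_inv_eq_one] at this
  simpa [Gρ, Gσ] using this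

lemma hρτ : (Gρ m n)⁻¹ * (Gτ m n)⁻¹ * Gρ m n * Gτ m n = (Gτ m n) ^ 2 := by
  have := rel_one m n (r := (FreeGroup.of 0)⁻¹ * (FreeGroup.of 2)⁻¹ * FreeGroup.of 0 *
    FreeGroup.of 2 * (FreeGroup.of 2 ^ 2)⁻¹) (by simp [GmnRels])
  simp only [map_mul, map_inv, map_pow, pi_of] at this
  rw [mul_inv_eq_one] at this
  simpa [Gρ, Gτ] using this

lemma hστ : Gσ m n * Gτ m n = Gτ m n * Gσ m n := by
  have := rel_one m n (r := (FreeGroup.of 1)⁻¹ * (FreeGroup.of 2)⁻¹ * FreeGroup.of 1 *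
    FreeGroup.of 2) (by simp [GmnRels])
  simp only [map_mul, map_inv, pi_of] at this
  simpa [mul_assoc] using
    (congrArg (fun z => Gτ m n * Gσ m n * z) (show (Gσ m n)⁻¹ * (Gτ m n)⁻¹ * Gσ m n * Gτ m n = 1 from this))

end Stmt14

namespace Stmt14x
open Subgroup
variable (m n : ℕ)
open Stmt14

local notation "ρ" => Gρ m n
local notation "σ" => Gσ m n
local notation "τ" => Gτ m n

lemma conjρ_σ : ρ⁻¹ * σ * ρ = σ⁻¹ := by
  have e1 : ρ⁻¹ * σ⁻¹ * ρ = σ := by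
    have := congrArg (· * σ⁻¹) (hρσ m n)
    simpa [pow_two, mul_assoc] using this
  have := congrArg Inv.inv e1
  simpa [mul_inv_rev, mul_assoc] using this

lemma conjρ'_σ : ρ * σ * ρ⁻¹ = σ⁻¹ := by
  have := congrArg (fun z => ρ * z * ρ⁻¹) (conjρ_σ m n)
  simp only [mul_assoc, mul_inv_cancel, mul_one, inv_mul_cancel_left] at this
  have := congrArg Inv.inv this
  simpa [mul_inv_rev, mul_assoc] using this.symm

lemma conjρ_τ : ρ⁻¹ * τ * ρ = τ⁻¹ := by
  have e1 : ρ⁻¹ * τ⁻¹ * ρ = τ := by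
    have := congrArg (· * τ⁻¹) (hρτ m n)
    simpa [pow_two, mul_assoc] using this
  have := congrArg Inv.inv e1
  simpa [mul_inv_rev, mul_assoc] using this

lemma conjρ'_τ : ρ * τ * ρ⁻¹ = τ⁻¹ := by
  have := congrArg (fun z => ρ * z * ρ⁻¹) (conjρ_τ m n)
  simp only [mul_assoc, mul_inv_cancel, mul_one, inv_mul_cancel_left] at this
  have := congrArg Inv.inv this
  simpa [mul_inv_rev, mul_assoc] using this.symm

end Stmt14x

namespace Stmt14x
open Subgroup Stmt14
variable (m n : ℕ)

local notation "ρ" => Gρ m n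
local notation "σ" => Gσ m n
local notation "τ" => Gτ m n

lemma comm_of_gen {G : Type*} [Group G] {S : Set G} (hS : Subgroup.closure S = ⊤)
    (h : ∀ a ∈ S, ∀ b ∈ S, Commute a b) (g k : G) : Commute g k := by
  have hcent : ∀ s ∈ S, s ∈ Subgroup.center G := by
    intro s hs
    rw [Subgroup.mem_center_iff]
    intro g
    have hg : g ∈ Subgroup.centralizer S := by
      have hle : Subgroup.closure S ≤ Subgroup.centralizer S := by
        rw [Subgroup.closure_le]
        intro a ha
        exact Subgroup.mem_centralizer_iff.mpr fun b hb => h b hb a ha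
      exact hle (by rw [hS]; trivial)
    exact (Subgroup.mem_centralizer_iff.mp hg s hs).symm
  have htop : Subgroup.closure S ≤ Subgroup.center G := Subgroup.closure_le _ |>.mpr hcent
  have hk : k ∈ Subgroup.center G := htop (by rw [hS]; trivial)
  exact Subgroup.mem_center_iff.mp hk g

lemma conj_closure_mem {G : Type*} [Group G] {S : Set G} (g : G)
    (hg : ∀ s ∈ S, g * s * g⁻¹ ∈ Subgroup.closure S) :
    ∀ h ∈ Subgroup.closure S, g * h * g⁻¹ ∈ Subgroup.closure S := by
  intro h hh
  refine Subgroup.closure_induction (fun x hx => hg x hx) ?_ (fun x y _ _ ihx ihy => ?_)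
    (fun x _ ihx => ?_) hh
  · simpa using Subgroup.one_mem _
  · rw [← conj_mul]; exact Subgroup.mul_mem _ ihx ihy
  · rw [← conj_inv]; exact Subgroup.inv_mem _ ihx

lemma closure_gen : Subgroup.closure {ρ, σ, τ} = ⊤ := by
  rw [eq_top_iff']
  intro x
  apply PresentedGroup.generated_by
  intro j
  fin_cases j
  · exact Subgroup.subset_closure (by left; rfl)
  · exact Subgroup.subset_closure (by right; left; rfl)
  · exact Subgroup.subset_closure (by right; right; rfl)

end Stmt14x

namespace Stmt14x
open Subgroup Stmt14
variable (m n : ℕ)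

local notation "ρ" => Gρ m n
local notation "σ" => Gσ m n
local notation "τ" => Gτ m n

def NN : Subgroup (Gmn m n) := Subgroup.closure {σ ^ 2, τ ^ 2}

lemma x_mem : σ ^ 2 ∈ NN m n := Subgroup.subset_closure (by left; rfl)
lemma y_mem : τ ^ 2 ∈ NN m n := Subgroup.subset_closure (by right; rfl)

lemma conjρ'_x : ρ * σ ^ 2 * ρ⁻¹ = (σ ^ 2)⁻¹ := by
  rw [← conj_pow, conjρ'_σ, inv_pow]

lemma conjρ_x : ρ⁻¹ * σ ^ 2 * ρ = (σ ^ 2)⁻¹ := by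
  rw [show ρ⁻¹ * σ ^ 2 * ρ = ρ⁻¹ * σ ^ 2 * ρ⁻¹⁻¹ by rw [inv_inv], ← conj_pow,
    show ρ⁻¹ * σ * ρ⁻¹⁻¹ = ρ⁻¹ * σ * ρ by rw [inv_inv], conjρ_σ, inv_pow]

lemma conjρ'_y : ρ * τ ^ 2 * ρ⁻¹ = (τ ^ 2)⁻¹ := by
  rw [← conj_pow, conjρ'_τ, inv_pow]

lemma conjρ_y : ρ⁻¹ * τ ^ 2 * ρ = (τ ^ 2)⁻¹ := by
  rw [show ρ⁻¹ * τ ^ 2 * ρ = ρ⁻¹ * τ ^ 2 * ρ⁻¹⁻¹ by rw [inv_inv], ← conj_pow,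
    show ρ⁻¹ * τ * ρ⁻¹⁻¹ = ρ⁻¹ * τ * ρ by rw [inv_inv], conjρ_τ, inv_pow]

lemma commute_στ : Commute σ τ := hστ m n

lemma conj_comm {G : Type*} [Group G] {a b : G} (h : Commute a b) : a * b * a⁻¹ = b := by
  rw [h.eq, mul_inv_cancel_right]

lemma gen_conj_mem : ∀ g ∈ ({ρ, σ, τ} : Set (Gmn m n)), (∀ s ∈ NN m n, g * s * g⁻¹ ∈ NN m n)
    ∧ (∀ s ∈ NN m n, g⁻¹ * s * g ∈ NN m n) := by
  have base : ∀ g : Gmn m n, (g * σ ^ 2 * g⁻¹ ∈ NN m n) → (g * τ ^ 2 * g⁻¹ ∈ NN m n) →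
      ∀ s ∈ NN m n, g * s * g⁻¹ ∈ NN m n := by
    intro g h1 h2
    apply conj_closure_mem
    intro s hs
    rcases hs with hs | hs
    · rw [hs]; exact h1
    · rw [hs]; exact h2
  intro g hg
  rcases hg with hg | hg | hg <;> subst hg
  · constructor
    · refine base _ ?_ ?_
      · rw [conjρ'_x]; exact Subgroup.inv_mem _ (x_mem m n)
      · rw [conjρ'_y]; exact Subgroup.inv_mem _ (y_mem m n)
    · refine base _ ?_ ?_ <;> rw [show (ρ⁻¹)⁻¹ = ρ by rw [inv_inv]]
      · rw [conjρ_x]; exact Subgroup.inv_mem _ (x_mem m n)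
      · rw [conjρ_y]; exact Subgroup.inv_mem _ (y_mem m n)
  · have c1 : Commute σ (σ ^ 2) := (Commute.refl σ).pow_right 2
    have c2 : Commute σ (τ ^ 2) := (commute_στ m n).pow_right 2
    constructor
    · refine base _ ?_ ?_
      · rw [conj_comm c1]; exact x_mem m n
      · rw [conj_comm c2]; exact y_mem m n
    · refine base _ ?_ ?_
      · rw [conj_comm c1.inv_left]; exact x_mem m n
      · rw [conj_comm c2.inv_left]; exact y_mem m n
  · have c1 : Commute τ (σ ^ 2) := ((commute_στ m n).symm).pow_right 2
    have c2 : Commute τ (τ ^ 2) := (Commute.refl τ).pow_right 2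
    constructor
    · refine base _ ?_ ?_
      · rw [conj_comm c1]; exact x_mem m n
      · rw [conj_comm c2]; exact y_mem m n
    · refine base _ ?_ ?_
      · rw [conj_comm c1.inv_left]; exact x_mem m n
      · rw [conj_comm c2.inv_left]; exact y_mem m n

lemma NN_normal : (NN m n).Normal := by
  rw [← Subgroup.normalizer_eq_top_iff, eq_top_iff']
  intro g
  refine PresentedGroup.generated_by _ _ (fun j => ?_) g
  have key : ∀ a ∈ ({ρ, σ, τ} : Set (Gmn m n)), a ∈ Subgroup.normalizer (NN m n : Set (Gmn m n)) := by
    intro a ha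
    obtain ⟨h1, h2⟩ := gen_conj_mem m n a ha
    rw [Subgroup.mem_normalizer_iff]
    intro h
    constructor
    · exact h1 h
    · intro hh
      have := h2 _ hh
      simpa [mul_assoc] using this
  fin_cases j
  · exact key _ (by left; rfl)
  · exact key _ (by right; left; rfl)
  · exact key _ (by right; right; rfl)

end Stmt14x

namespace Stmt14x
open Subgroup Stmt14
variable (m n : ℕ)

local notation "ρ" => Gρ m n
local notation "σ" => Gσ m n
local notation "τ" => Gτ m n

open scoped commutatorElement

lemma comm_ρσ : ⁅ρ, σ⁆ = (σ ^ 2)⁻¹ := by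
  rw [commutatorElement_def, conjρ'_σ, ← mul_inv_rev, ← pow_two]

lemma comm_ρτ : ⁅ρ, τ⁆ = (τ ^ 2)⁻¹ := by
  rw [commutatorElement_def, conjρ'_τ, ← mul_inv_rev, ← pow_two]

lemma comm_eq : commutator (Gmn m n) = NN m n := by
  haveI := NN_normal m n
  apply le_antisymm
  · rw [_root_.commutator_def, Subgroup.commutator_le]
    intro g _ h _
    rw [← QuotientGroup.eq_one_iff (N := NN m n) ⁅g, h⁆]
    have : ((⁅g, h⁆ : Gmn m n) : Gmn m n ⧸ NN m n)
        = ⁅(g : Gmn m n ⧸ NN m n), (h : Gmn m n ⧸ NN m n)⁆ := by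
      simp [commutatorElement_def]
    rw [this, commutatorElement_eq_one_iff_commute]
    -- all elements of the quotient commute
    have hS : Subgroup.closure ((QuotientGroup.mk' (NN m n)) ''
        {ρ, σ, τ}) = ⊤ := by
      rw [← MonoidHom.map_closure (QuotientGroup.mk' (NN m n)), closure_gen,
        ← MonoidHom.range_eq_map]
      exact MonoidHom.range_eq_top.mpr (QuotientGroup.mk'_surjective _)
    apply comm_of_gen hS
    have hcρσ : Commute ((ρ : Gmn m n) : Gmn m n ⧸ NN m n) (σ : Gmn m n ⧸ NN m n) := by
      rw [← commutatorElement_eq_one_iff_commute,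
        show ⁅((ρ : Gmn m n) : Gmn m n ⧸ NN m n), ((σ : Gmn m n) : Gmn m n ⧸ NN m n)⁆
          = ((⁅(ρ : Gmn m n), σ⁆ : Gmn m n) : Gmn m n ⧸ NN m n) by simp [commutatorElement_def],
        QuotientGroup.eq_one_iff, comm_ρσ]
      exact Subgroup.inv_mem _ (x_mem m n)
    have hcρτ : Commute ((ρ : Gmn m n) : Gmn m n ⧸ NN m n) (τ : Gmn m n ⧸ NN m n) := by
      rw [← commutatorElement_eq_one_iff_commute,
        show ⁅((ρ : Gmn m n) : Gmn m n ⧸ NN m n), ((τ : Gmn m n) : Gmn m n ⧸ NN m n)⁆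
          = ((⁅(ρ : Gmn m n), τ⁆ : Gmn m n) : Gmn m n ⧸ NN m n) by simp [commutatorElement_def],
        QuotientGroup.eq_one_iff, comm_ρτ]
      exact Subgroup.inv_mem _ (y_mem m n)
    have hcστ : Commute ((σ : Gmn m n) : Gmn m n ⧸ NN m n) (τ : Gmn m n ⧸ NN m n) := by
      have : Commute σ τ := commute_στ m n
      exact congrArg (QuotientGroup.mk : Gmn m n → Gmn m n ⧸ NN m n) this
    rintro _ ⟨a, ha, rfl⟩ _ ⟨b, hb, rfl⟩
    rcases ha with ha | ha | ha <;> rcases hb with hb | hb | hb <;> subst ha <;> subst hb <;>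
      first
        | exact Commute.refl _
        | exact hcρσ | exact hcρτ | exact hcστ
        | exact hcρσ.symm | exact hcρτ.symm | exact hcστ.symm
  · rw [NN, Subgroup.closure_le]
    intro s hs
    have hx : σ ^ 2 = ⁅ρ⁻¹, σ⁻¹⁆ := by
      rw [commutatorElement_def, inv_inv, inv_inv]; exact (hρσ m n).symm
    have hy : τ ^ 2 = ⁅ρ⁻¹, τ⁻¹⁆ := by
      rw [commutatorElement_def, inv_inv, inv_inv]; exact (hρτ m n).symm
    rcases hs with hs | hs <;> rw [hs, SetLike.mem_coe, _root_.commutator_def]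
    · rw [hx]; exact Subgroup.commutator_mem_commutator (Subgroup.mem_top _) (Subgroup.mem_top _)
    · rw [hy]; exact Subgroup.commutator_mem_commutator (Subgroup.mem_top _) (Subgroup.mem_top _)

end Stmt14x

namespace Stmt14x
open Subgroup Stmt14 QuaternionGroup DihedralGroup

lemma q_inv_a {k : ℕ} (i : ZMod (2 * k)) : (QuaternionGroup.a i)⁻¹ = QuaternionGroup.a (-i) :=
  inv_eq_of_mul_eq_one_right (by rw [QuaternionGroup.a_mul_a, add_neg_cancel]; rfl)

lemma q_inv_xa {k : ℕ} (i : ZMod (2 * k)) :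
    (QuaternionGroup.xa i)⁻¹ = QuaternionGroup.xa (i - (k : ZMod (2 * k))) :=
  inv_eq_of_mul_eq_one_right
    (by rw [QuaternionGroup.xa_mul_xa, show (k : ZMod (2 * k)) + (i - (k : ZMod (2 * k))) - i = 0
        by ring]; rfl)

lemma d_inv_r {k : ℕ} (i : ZMod k) : (DihedralGroup.r i)⁻¹ = DihedralGroup.r (-i) :=
  inv_eq_of_mul_eq_one_right (by rw [DihedralGroup.r_mul_r, add_neg_cancel]; rfl)

lemma d_inv_sr {k : ℕ} (i : ZMod k) : (DihedralGroup.sr i)⁻¹ = DihedralGroup.sr i :=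
  inv_eq_of_mul_eq_one_right (DihedralGroup.sr_mul_self i)

variable (m n : ℕ)

def fQ : Fin 3 → QuaternionGroup (2 ^ n) := ![QuaternionGroup.xa 0, QuaternionGroup.a 1, 1]

lemma hc2 : ((2 ^ n : ℕ) : ZMod (2 * 2 ^ n)) + ((2 ^ n : ℕ) : ZMod (2 * 2 ^ n)) = 0 := by
  rw [← Nat.cast_add, show 2 ^ n + 2 ^ n = 2 * 2 ^ n by ring, ZMod.natCast_self]

lemma fQ_rels : ∀ r ∈ GmnRels m n, FreeGroup.lift (fQ n) r = 1 := by
  have hc := hc2 n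
  intro r hr
  rcases (by simpa [GmnRels] using hr :
    r = FreeGroup.of 0 ^ 4 ∨ r = FreeGroup.of 1 ^ 2 ^ (n + 1) ∨ r = FreeGroup.of 2 ^ 2 ^ (m + 1) ∨
    r = FreeGroup.of 0 ^ 2 * (FreeGroup.of 1 ^ 2 ^ n)⁻¹ ∨
    r = (FreeGroup.of 0)⁻¹ * (FreeGroup.of 1)⁻¹ * FreeGroup.of 0 * FreeGroup.of 1 *
      (FreeGroup.of 1 ^ 2)⁻¹ ∨
    r = (FreeGroup.of 0)⁻¹ * (FreeGroup.of 2)⁻¹ * FreeGroup.of 0 * FreeGroup.of 2 *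
      (FreeGroup.of 2 ^ 2)⁻¹ ∨
    r = (FreeGroup.of 1)⁻¹ * (FreeGroup.of 2)⁻¹ * FreeGroup.of 1 * FreeGroup.of 2)
    with rfl | rfl | rfl | rfl | rfl | rfl | rfl <;>
      simp only [map_mul, map_pow, map_inv, FreeGroup.lift_apply_of, fQ, Matrix.cons_val_zero,
        Matrix.cons_val_one, Matrix.head_cons, Matrix.cons_val_two, Matrix.tail_cons]
  · exact QuaternionGroup.xa_pow_four 0
  · rw [QuaternionGroup.a_one_pow, show ((2 ^ (n + 1) : ℕ) : ZMod (2 * 2 ^ n)) = 0 by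
      rw [ZMod.natCast_eq_zero_iff]; exact dvd_of_eq (by ring)]
    rfl
  · exact one_pow _
  · rw [QuaternionGroup.xa_sq, QuaternionGroup.a_one_pow, mul_inv_eq_one]
  · simp only [q_inv_xa, q_inv_a, QuaternionGroup.a_one_pow, QuaternionGroup.xa_mul_a,
      QuaternionGroup.xa_mul_xa, QuaternionGroup.a_mul_a]
    rw [QuaternionGroup.one_def]
    congr 1
    push_cast at hc ⊢
    linear_combination hc
  · simp only [q_inv_xa, inv_one, mul_one, one_pow, QuaternionGroup.xa_mul_xa]
    rw [QuaternionGroup.one_def]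
    congr 1
    push_cast at hc ⊢
    linear_combination hc
  · simp only [q_inv_a, inv_one, mul_one, QuaternionGroup.a_mul_a]
    rw [QuaternionGroup.one_def]
    congr 1
    ring

def fhom : Gmn m n →* QuaternionGroup (2 ^ n) := PresentedGroup.toGroup (fQ_rels m n)

lemma fhom_σ : fhom m n (Gσ m n) = QuaternionGroup.a 1 := PresentedGroup.toGroup.of _
lemma fhom_τ : fhom m n (Gτ m n) = 1 := PresentedGroup.toGroup.of _

end Stmt14x

namespace Stmt14x
open Subgroup Stmt14
variable (m n : ℕ)

def gD : Fin 3 → DihedralGroup (2 ^ (m + 1)) := ![DihedralGroup.sr 0, 1, DihedralGroup.r 1]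

lemma gD_rels : ∀ r ∈ GmnRels m n, FreeGroup.lift (gD m) r = 1 := by
  intro r hr
  rcases (by simpa [GmnRels] using hr :
    r = FreeGroup.of 0 ^ 4 ∨ r = FreeGroup.of 1 ^ 2 ^ (n + 1) ∨ r = FreeGroup.of 2 ^ 2 ^ (m + 1) ∨
    r = FreeGroup.of 0 ^ 2 * (FreeGroup.of 1 ^ 2 ^ n)⁻¹ ∨
    r = (FreeGroup.of 0)⁻¹ * (FreeGroup.of 1)⁻¹ * FreeGroup.of 0 * FreeGroup.of 1 *
      (FreeGroup.of 1 ^ 2)⁻¹ ∨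
    r = (FreeGroup.of 0)⁻¹ * (FreeGroup.of 2)⁻¹ * FreeGroup.of 0 * FreeGroup.of 2 *
      (FreeGroup.of 2 ^ 2)⁻¹ ∨
    r = (FreeGroup.of 1)⁻¹ * (FreeGroup.of 2)⁻¹ * FreeGroup.of 1 * FreeGroup.of 2)
    with rfl | rfl | rfl | rfl | rfl | rfl | rfl <;>
      simp only [map_mul, map_pow, map_inv, FreeGroup.lift_apply_of, gD, Matrix.cons_val_zero,
        Matrix.cons_val_one, Matrix.head_cons, Matrix.cons_val_two, Matrix.tail_cons]
  · rw [show (4 : ℕ) = 2 * 2 from rfl, pow_mul,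
      pow_two (DihedralGroup.sr (0 : ZMod (2 ^ (m + 1)))), DihedralGroup.sr_mul_self, one_pow]
  · exact one_pow _
  · rw [DihedralGroup.r_one_pow, show ((2 ^ (m + 1) : ℕ) : ZMod (2 ^ (m + 1))) = 0 from
      ZMod.natCast_self _]
    rfl
  · rw [pow_two, DihedralGroup.sr_mul_self, one_pow, inv_one, mul_one]
  · simp only [inv_one, mul_one, one_pow, d_inv_sr, DihedralGroup.sr_mul_sr, sub_self]
    rfl
  · simp only [d_inv_sr, d_inv_r, DihedralGroup.r_one_pow, DihedralGroup.sr_mul_r,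
      DihedralGroup.sr_mul_sr, DihedralGroup.r_mul_r]
    rw [DihedralGroup.one_def]
    congr 1
    push_cast
    ring
  · simp only [inv_one, one_mul, mul_one, d_inv_r, DihedralGroup.r_mul_r, neg_add_cancel]
    rfl

def ghom : Gmn m n →* DihedralGroup (2 ^ (m + 1)) := PresentedGroup.toGroup (gD_rels m n)

lemma ghom_σ : ghom m n (Gσ m n) = 1 := PresentedGroup.toGroup.of _
lemma ghom_τ : ghom m n (Gτ m n) = DihedralGroup.r 1 := PresentedGroup.toGroup.of _

end Stmt14x

namespace Stmt14x
open Subgroup Stmt14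
variable (m n : ℕ)

lemma pow_mod {G : Type*} [Group G] {g : G} {k : ℕ} (hk : g ^ k = 1) (j : ℕ) :
    g ^ (j % k) = g ^ j := by
  conv_rhs => rw [← Nat.mod_add_div j k]
  rw [pow_add, pow_mul, hk, one_pow, mul_one]

lemma hx_ord : (Gσ m n ^ 2) ^ 2 ^ n = 1 := by
  rw [← pow_mul, show 2 * 2 ^ n = 2 ^ (n + 1) by ring]; exact hσ m n

lemma hy_ord : (Gτ m n ^ 2) ^ 2 ^ m = 1 := by
  rw [← pow_mul, show 2 * 2 ^ m = 2 ^ (m + 1) by ring]; exact hτ m n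

lemma key_dvd (p q : ℕ) (h : (Gσ m n ^ 2) ^ p * (Gτ m n ^ 2) ^ q = 1) :
    2 ^ n ∣ p ∧ 2 ^ m ∣ q := by
  constructor
  · have := congrArg (fhom m n) h
    simp only [map_mul, map_pow, map_one, fhom_σ m n, fhom_τ m n, one_pow, mul_one] at this
    rw [← pow_mul, QuaternionGroup.a_one_pow, QuaternionGroup.one_def] at this
    have h2 : ((2 * p : ℕ) : ZMod (2 * 2 ^ n)) = 0 := by
      have := QuaternionGroup.a.inj this
      simpa using this
    rw [ZMod.natCast_eq_zero_iff] at h2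
    exact (mul_dvd_mul_iff_left (two_ne_zero)).mp h2
  · have := congrArg (ghom m n) h
    simp only [map_mul, map_pow, map_one, ghom_σ m n, ghom_τ m n, one_pow, one_mul] at this
    rw [← pow_mul, DihedralGroup.r_one_pow, DihedralGroup.one_def] at this
    have h2 : ((2 * q : ℕ) : ZMod (2 ^ (m + 1))) = 0 := by
      have := DihedralGroup.r.inj this
      simpa using this
    rw [ZMod.natCast_eq_zero_iff, pow_succ'] at h2
    exact (mul_dvd_mul_iff_left (two_ne_zero)).mp h2

end Stmt14x

/-- The derived subgroup `G' = ⟨σ², τ²⟩` of `G_{m,n}` is isomorphic to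
`Z/2^n × Z/2^m`. -/
theorem stmt14 (m n : ℕ) (hm : 1 ≤ m) (hn : 1 ≤ n) :
    commutator (Gmn m n) = Subgroup.closure {Gσ m n ^ 2, Gτ m n ^ 2} ∧
    Nonempty ((commutator (Gmn m n)) ≃*
      Multiplicative (ZMod (2 ^ n) × ZMod (2 ^ m))) := by
  haveI fn : Fact (1 < 2 ^ n) := ⟨Nat.one_lt_two_pow_iff.mpr (by omega)⟩
  haveI fm : Fact (1 < 2 ^ m) := ⟨Nat.one_lt_two_pow_iff.mpr (by omega)⟩
  haveI : NeZero (2 ^ n) := ⟨by positivity⟩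
  haveI : NeZero (2 ^ m) := ⟨by positivity⟩
  set x := Gσ m n ^ 2 with hxdef
  set y := Gτ m n ^ 2 with hydef
  have hx : x ^ 2 ^ n = 1 := Stmt14x.hx_ord m n
  have hy : y ^ 2 ^ m = 1 := Stmt14x.hy_ord m n
  have hcxy : Commute x y := (Stmt14x.commute_στ m n).pow_pow 2 2
  refine ⟨Stmt14x.comm_eq m n, ?_⟩
  let ψ : Multiplicative (ZMod (2 ^ n) × ZMod (2 ^ m)) →* Gmn m n :=
    { toFun := fun p => x ^ (p.toAdd.1.val) * y ^ (p.toAdd.2.val)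
      map_one' := by simp
      map_mul' := by
        intro p q
        show x ^ ((p.toAdd.1 + q.toAdd.1).val) * y ^ ((p.toAdd.2 + q.toAdd.2).val) = _
        rw [ZMod.val_add, ZMod.val_add, Stmt14x.pow_mod hx, Stmt14x.pow_mod hy,
          pow_add, pow_add]
        exact Commute.mul_mul_mul_comm (hcxy.pow_pow _ _) _ _ }
  have hψinj : Function.Injective ψ := by
    rw [injective_iff_map_eq_one]
    intro p hp
    have hp' : x ^ (p.toAdd.1.val) * y ^ (p.toAdd.2.val) = 1 := hp
    obtain ⟨h1, h2⟩ := Stmt14x.key_dvd m n _ _ hp'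
    have e1 : p.toAdd.1.val = 0 := Nat.eq_zero_of_dvd_of_lt h1 (ZMod.val_lt _)
    have e2 : p.toAdd.2.val = 0 := Nat.eq_zero_of_dvd_of_lt h2 (ZMod.val_lt _)
    have : p.toAdd = 0 := Prod.ext ((ZMod.val_eq_zero _).mp e1) ((ZMod.val_eq_zero _).mp e2)
    exact Multiplicative.toAdd.injective this
  have hrange : ψ.range = Subgroup.closure {x, y} := by
    apply le_antisymm
    · rintro _ ⟨p, rfl⟩
      exact Subgroup.mul_mem _
        (Subgroup.pow_mem _ (Subgroup.subset_closure (by left; rfl)) _)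
        (Subgroup.pow_mem _ (Subgroup.subset_closure (by right; rfl)) _)
    · rw [Subgroup.closure_le]
      rintro s (hs | hs)
      · refine ⟨Multiplicative.ofAdd (1, 0), ?_⟩
        show x ^ ((1 : ZMod (2 ^ n)).val) * y ^ ((0 : ZMod (2 ^ m)).val) = s
        rw [ZMod.val_one, ZMod.val_zero, pow_one, pow_zero, mul_one, hs]
      · refine ⟨Multiplicative.ofAdd (0, 1), ?_⟩
        show x ^ ((0 : ZMod (2 ^ n)).val) * y ^ ((1 : ZMod (2 ^ m)).val) = s
        rw [ZMod.val_one, ZMod.val_zero, pow_one, pow_zero, one_mul, hs]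
  have hNN : Subgroup.closure {x, y} = Stmt14x.NN m n := rfl
  exact ⟨((MulEquiv.subgroupCongr (Stmt14x.comm_eq m n)).trans
    (MulEquiv.subgroupCongr (hNN ▸ hrange).symm)).trans (MonoidHom.ofInjective hψinj).symm⟩
end
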